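/- arXiv:1607.00927 — 5 statements merged into one kernel-verified Lean document; each statement's English description precedes it below -/
import Mathlib

section
/- Let G = (V,E) be a finite connected graph containing at least one odd cycle, and let c ≥ 2 be an integer. Then for every nonempty initial active set S₀ ⊆ V there exists a set T reachable from S₀ by finitely many feasible c-successor steps such that T contains two adjacent vertices (equivalently, with positive probability there is a time at which two neighboring vertices are simultaneously active). -/
/-- The neighborhood `N(S)` of a set of vertices: all vertices adjacent to at
least one vertex of `S`. -/
def nbhd {V : Type*} (G : SimpleGraph V) (S : Set V) : Set V :=
  {w | ∃ v ∈ S, G.Adj v w}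

/-- `T` is a feasible `c`-successor of the nonempty active set `S` in the simple
`c`-BRW: each active vertex `v ∈ S` chooses a nonempty set `F v` of at most `c`
of its neighbors, and `T` is the union of all chosen vertices. -/
def FeasibleSucc {V : Type*} (G : SimpleGraph V) (c : ℕ) (S T : Set V) : Prop :=
  S.Nonempty ∧ ∃ F : V → Set V,
    (∀ v ∈ S, (F v).Nonempty ∧ F v ⊆ nbhd G {v} ∧ (F v).ncard ≤ c) ∧
    T = ⋃ v ∈ S, F v

open Relation Classical in
/-- Moving every active token by one deterministic step is feasible. -/
lemma feas_image {V : Type*} {G : SimpleGraph V} {c : ℕ} (hc : 1 ≤ c) (f : V → V)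
    (hf : ∀ u, G.Adj u (f u)) {S : Set V} (hS : S.Nonempty) :
    FeasibleSucc G c S (f '' S) := by
  refine ⟨hS, fun u => {f u}, fun v _ => ⟨⟨f v, rfl⟩, ?_, by simp [Set.ncard_singleton]; omega⟩, ?_⟩
  · intro x hx
    rcases hx with rfl
    exact ⟨v, Set.mem_singleton v, hf v⟩
  · ext x; simp [Set.mem_image]; tauto

open Classical in
/-- Moving a pair (possibly equal) of tokens to specified neighbors is feasible. -/
lemma feas_pair {V : Type*} {G : SimpleGraph V} {c : ℕ} (hc : 2 ≤ c) {p q p' q' : V}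
    (h1 : G.Adj p p') (h2 : G.Adj q q') :
    FeasibleSucc G c {p, q} {p', q'} := by
  classical
  refine ⟨⟨p, Or.inl rfl⟩,
    fun u => (if u = p then {p'} else ∅) ∪ (if u = q then {q'} else ∅), fun v hv => ⟨?_, ?_, ?_⟩, ?_⟩
  · rcases hv with rfl | rfl
    · exact ⟨p', by simp⟩
    · exact ⟨q', by simp⟩
  · intro x hx
    rcases hx with hx | hx
    · split_ifs at hx with h
      · rcases hx with rfl; exact ⟨v, Set.mem_singleton v, h ▸ h1⟩
      · exact absurd hx (Set.notMem_empty x)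
    · split_ifs at hx with h
      · rcases hx with rfl; exact ⟨v, Set.mem_singleton v, h ▸ h2⟩
      · exact absurd hx (Set.notMem_empty x)
  · calc ((if v = p then {p'} else ∅) ∪ (if v = q then {q'} else ∅) : Set V).ncard
        ≤ ({p', q'} : Set V).ncard := by
          apply Set.ncard_le_ncard _ (Set.toFinite _)
          intro x hx
          rcases hx with hx | hx <;> split_ifs at hx <;>
            simp_all [Set.mem_insert_iff, Set.mem_singleton_iff]
      _ ≤ 2 := le_trans (Set.ncard_insert_le _ _) (by simp)
      _ ≤ c := hc
  · ext x
    by_cases hpq : p = q <;> simp [Set.mem_iUnion, hpq] <;> tauto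

/-- On a finite connected graph containing an odd cycle, for `c ≥ 2` and every
nonempty initial active set `S₀`, some set reachable from `S₀` by finitely many
feasible `c`-successor steps contains two adjacent vertices. -/
theorem stmt3 {V : Type*} [Fintype V] (G : SimpleGraph V) (hconn : G.Connected)
    (hodd : ∃ (v : V) (w : G.Walk v v), w.IsCycle ∧ Odd w.length)
    (c : ℕ) (hc : 2 ≤ c) (S₀ : Set V) (hS₀ : S₀.Nonempty) :
    ∃ T : Set V, Relation.ReflTransGen (FeasibleSucc G c) S₀ T ∧
      ∃ x y, x ∈ T ∧ y ∈ T ∧ G.Adj x y := by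
  classical
  obtain ⟨a, w, hcyc, hoddlen⟩ := hodd
  have hL3 : 3 ≤ w.length := hcyc.three_le_length
  obtain ⟨k, hk⟩ := hoddlen
  have hk1 : 1 ≤ k := by omega
  have hab : G.Adj a (w.getVert 1) := by
    have h := w.adj_getVert_succ (i := 0) (by omega)
    rwa [w.getVert_zero] at h
  -- the odd-cycle splitting: from {a} reach the pair {getVert j, getVert (length - j)}
  have key : ∀ j, 1 ≤ j → j ≤ k →
      Relation.ReflTransGen (FeasibleSucc G c) {a}
        {w.getVert j, w.getVert (w.length - j)} := by
    intro j hj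
    induction j, hj using Nat.le_induction with
    | base =>
      intro _
      refine Relation.ReflTransGen.single ?_
      have h2 : G.Adj a (w.getVert (w.length - 1)) := by
        have h := w.adj_getVert_succ (i := w.length - 1) (by omega)
        rw [show w.length - 1 + 1 = w.length from by omega, w.getVert_length] at h
        exact h.symm
      have h := feas_pair hc (p := a) (q := a) hab h2
      rwa [Set.pair_eq_singleton] at h
    | succ j hj ih =>
      intro hjk
      refine (ih (by omega)).tail ?_
      have h1 : G.Adj (w.getVert j) (w.getVert (j + 1)) := w.adj_getVert_succ (by omega)
      have h2 : G.Adj (w.getVert (w.length - j)) (w.getVert (w.length - (j + 1))) := by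
        have h := w.adj_getVert_succ (i := w.length - (j + 1)) (by omega)
        rw [show w.length - (j + 1) + 1 = w.length - j from by omega] at h
        exact h.symm
      exact feas_pair hc h1 h2
  have hka : Relation.ReflTransGen (FeasibleSucc G c) {a}
      {w.getVert k, w.getVert (k + 1)} := by
    have h := key k hk1 le_rfl
    rwa [show w.length - k = k + 1 from by omega] at h
  have hkadj : G.Adj (w.getVert k) (w.getVert (k + 1)) := w.adj_getVert_succ (by omega)
  -- a deterministic map moving every vertex one step closer to `a`
  have hstep : ∀ u, u ≠ a → ∃ u', G.Adj u u' ∧ G.dist u' a < G.dist u a := by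
    intro u hu
    obtain ⟨p, hp⟩ := (hconn.preconnected u a).exists_walk_length_eq_dist
    have hpos : 0 < G.dist u a := hconn.pos_dist_of_ne hu
    cases p with
    | nil => exact absurd rfl hu
    | cons h q =>
      refine ⟨_, h, ?_⟩
      have := G.dist_le q
      simp [SimpleGraph.Walk.length_cons] at hp
      omega
  set f : V → V := fun u => if h : u = a then w.getVert 1 else (hstep u h).choose with hf
  have hfa : f a = w.getVert 1 := by simp [hf]
  have hfadj : ∀ u, G.Adj u (f u) := by
    intro u
    by_cases h : u = a
    · subst h; rw [hfa]; exact hab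
    · simpa [hf, h] using (hstep u h).choose_spec.1
  have hfd : ∀ u, u ≠ a → G.dist (f u) a < G.dist u a := by
    intro u h
    simpa [hf, h] using (hstep u h).choose_spec.2
  -- convergence of the iterates into the adjacent pair {a, getVert 1}
  have conv : ∀ t u, G.dist u a ≤ t → f^[t] u ∈ ({a, w.getVert 1} : Set V) := by
    intro t
    induction t with
    | zero =>
      intro u hu
      have : u = a := (hconn.dist_eq_zero_iff).mp (by omega)
      simp [this]
    | succ t ih =>
      intro u hu
      rw [Function.iterate_succ_apply]
      by_cases h : u = a
      · subst h
        rw [hfa]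
        rcases Nat.eq_zero_or_pos t with ht | ht
        · simp [ht]
        · exact ih _ (by rw [SimpleGraph.dist_eq_one_iff_adj.mpr hab.symm]; omega)
      · exact ih _ (by have := hfd u h; omega)
  have hdist : ∀ u, G.dist u a ≤ Fintype.card V := by
    intro u
    obtain ⟨p, hp, hlen⟩ := (hconn.preconnected u a).exists_path_of_dist
    have := hp.length_lt
    omega
  -- the iterated image is reachable
  have hiter : ∀ t, Relation.ReflTransGen (FeasibleSucc G c) S₀ (f^[t] '' S₀) := by
    intro t
    induction t with
    | zero => simpa using Relation.ReflTransGen.refl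
    | succ t ih =>
      refine ih.tail ?_
      have heq : f^[t + 1] '' S₀ = f '' (f^[t] '' S₀) := by
        rw [Function.iterate_succ', Set.image_comp]
      rw [heq]
      exact feas_image (by omega) f hfadj (hS₀.image _)
  have hreachS₁ := hiter (Fintype.card V)
  have hS₁sub : f^[Fintype.card V] '' S₀ ⊆ {a, w.getVert 1} := by
    rintro x ⟨u, hu, rfl⟩
    exact conv _ u (hdist u)
  have hS₁ne : (f^[Fintype.card V] '' S₀).Nonempty := hS₀.image _
  have fromA : ∀ S : Set V, Relation.ReflTransGen (FeasibleSucc G c) S₀ S → S = {a} →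
      ∃ T : Set V, Relation.ReflTransGen (FeasibleSucc G c) S₀ T ∧
        ∃ x y, x ∈ T ∧ y ∈ T ∧ G.Adj x y := by
    rintro S hS rfl
    exact ⟨{w.getVert k, w.getVert (k + 1)}, hS.trans hka,
      w.getVert k, w.getVert (k + 1), Or.inl rfl, Or.inr rfl, hkadj⟩
  by_cases hain : a ∈ f^[Fintype.card V] '' S₀
  · by_cases hbin : w.getVert 1 ∈ f^[Fintype.card V] '' S₀
    · exact ⟨_, hreachS₁, a, w.getVert 1, hain, hbin, hab⟩
    · refine fromA _ hreachS₁ ?_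
      apply Set.eq_singleton_iff_unique_mem.mpr ⟨hain, fun x hx => ?_⟩
      rcases hS₁sub hx with h | h
      · exact h
      · exact absurd (h ▸ hx) hbin
  · have hS₁b : f^[Fintype.card V] '' S₀ = {w.getVert 1} := by
      apply Set.eq_singleton_iff_nonempty_unique_mem.mpr ⟨hS₁ne, fun x hx => ?_⟩
      rcases hS₁sub hx with h | h
      · exact absurd (h ▸ hx) hain
      · exact h
    have hstep2 : FeasibleSucc G c {w.getVert 1} {a} := by
      have h := feas_pair hc (p := w.getVert 1) (q := w.getVert 1) hab.symm hab.symm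
      rwa [Set.pair_eq_singleton, Set.pair_eq_singleton] at h
    exact fromA {a} ((hS₁b ▸ hreachS₁).tail hstep2) rfl
end

section
/- In the hypercube graph H_N, any two distinct vertices have at most two common neighbors; more generally, for every s with 2 ≤ s ≤ 2^N, any s distinct vertices of H_N have at most s common neighbors. -/
/-- The hypercube graph `H_N` on vertex set `{0,1}^N`: two binary strings are
adjacent iff their Hamming distance equals 1. -/
def hypercube (N : ℕ) : SimpleGraph (Fin N → Bool) where
  Adj x y := hammingDist x y = 1
  symm := by
    constructor
    intro x y h
    rwa [hammingDist_comm]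
  loopless := by
    constructor
    intro x h
    simp [hammingDist_self] at h

lemma dist_one_exists {N : ℕ} {x v : Fin N → Bool} (h : hammingDist x v = 1) :
    ∃ i, x i ≠ v i ∧ ∀ k, k ≠ i → x k = v k := by
  unfold hammingDist at h
  rw [Finset.card_eq_one] at h
  obtain ⟨i, hi⟩ := h
  refine ⟨i, ?_, ?_⟩
  · have : i ∈ Finset.univ.filter fun j => x j ≠ v j := by rw [hi]; simp
    simpa using this
  · intro k hk
    by_contra hne
    have : k ∈ Finset.univ.filter fun j => x j ≠ v j := by simp [hne]
    rw [hi, Finset.mem_singleton] at this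
    exact hk this

lemma pair_common {N : ℕ} (x y : Fin N → Bool) (hxy : x ≠ y) :
    {v | (hypercube N).Adj x v ∧ (hypercube N).Adj y v}.ncard ≤ 2 := by
  set S := {v | (hypercube N).Adj x v ∧ (hypercube N).Adj y v} with hS
  rcases Set.eq_empty_or_nonempty S with he | ⟨v0, hv0⟩
  · simp [he]
  · obtain ⟨hxv0, hyv0⟩ := hv0
    obtain ⟨i0, hi0, hi0'⟩ := dist_one_exists hxv0
    obtain ⟨j0, hj0, hj0'⟩ := dist_one_exists hyv0
    have hij : i0 ≠ j0 := by
      rintro rfl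
      apply hxy
      funext k
      by_cases hk : k = i0
      · subst hk
        revert hi0 hj0
        cases x k <;> cases y k <;> cases v0 k <;> decide
      · rw [hi0' k hk, hj0' k hk]
    -- x and y agree off {i0, j0}
    have hagree : ∀ k, k ≠ i0 → k ≠ j0 → x k = y k := fun k h1 h2 =>
      (hi0' k h1).trans (hj0' k h2).symm
    have hsub : S ⊆ {Function.update x i0 (!x i0), Function.update x j0 (!x j0)} := by
      intro v hv
      obtain ⟨hxv, hyv⟩ := hv
      obtain ⟨i, hi, hi'⟩ := dist_one_exists hxv
      obtain ⟨j, hj, hj'⟩ := dist_one_exists hyv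
      have hijv : i ≠ j := by
        rintro rfl
        apply hxy
        funext k
        by_cases hk : k = i
        · subst hk
          revert hi hj
          cases x k <;> cases y k <;> cases v k <;> decide
        · rw [hi' k hk, hj' k hk]
      have hxyi : x i ≠ y i := by
        have h1 : y i = v i := hj' i hijv
        rw [h1]; exact hi
      have hiI : i = i0 ∨ i = j0 := by
        by_contra hc
        push_neg at hc
        exact hxyi (hagree i hc.1 hc.2)
      have hveq : v = Function.update x i (!x i) := by
        funext k
        by_cases hk : k = i
        · subst hk
          simp only [Function.update_self]
          revert hi; cases x k <;> cases v k <;> decide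
        · rw [Function.update_of_ne hk, ← hi' k hk]
      rcases hiI with rfl | rfl
      · left; exact hveq
      · right; exact hveq
    calc S.ncard ≤ ({Function.update x i0 (!x i0), Function.update x j0 (!x j0)} :
            Set (Fin N → Bool)).ncard :=
          Set.ncard_le_ncard hsub (Set.toFinite _)
      _ ≤ 2 := by
          apply le_trans (Set.ncard_insert_le _ _)
          simp

/-- In the hypercube `H_N`, two distinct vertices have at most two common
neighbors; more generally, any `s` distinct vertices (`2 ≤ s ≤ 2^N`) have at
most `s` common neighbors. -/
theorem stmt6 (N : ℕ) :
    (∀ x y : Fin N → Bool, x ≠ y →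
      {v | (hypercube N).Adj x v ∧ (hypercube N).Adj y v}.ncard ≤ 2) ∧
    (∀ T : Set (Fin N → Bool), 2 ≤ T.ncard → T.ncard ≤ 2 ^ N →
      {v | ∀ x ∈ T, (hypercube N).Adj x v}.ncard ≤ T.ncard) := by
  constructor
  · exact fun x y => pair_common x y
  · intro T h2 _
    have h1 : 1 < T.ncard := h2
    rw [Set.one_lt_ncard_iff (Set.toFinite T)] at h1
    obtain ⟨a, b, ha, hb, hab⟩ := h1
    have hsub : {v | ∀ x ∈ T, (hypercube N).Adj x v} ⊆
        {v | (hypercube N).Adj a v ∧ (hypercube N).Adj b v} := by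
      intro v hv
      exact ⟨hv a ha, hv b hb⟩
    calc {v | ∀ x ∈ T, (hypercube N).Adj x v}.ncard
        ≤ {v | (hypercube N).Adj a v ∧ (hypercube N).Adj b v}.ncard :=
          Set.ncard_le_ncard hsub (Set.toFinite _)
      _ ≤ 2 := pair_common a b hab
      _ ≤ T.ncard := h2
end

section
/- Let G be a finite connected d-regular graph on n vertices with adjacency matrix A, and let λ < d be such that every eigenvalue of A other than the largest one d satisfies |λ_i| ≤ λ (i.e. G is a λ absolute eigenvalue expander). Then for every set S of vertices with |S| ≤ n/2, the neighborhood satisfies |N(S)| ≥ |S| / ( λ²/d² + (1 − λ²/d²)·|S|/n ). -/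
open Matrix SimpleGraph Finset
open scoped InnerProductSpace

lemma adj_dot_sym {V : Type*} [Fintype V] [DecidableEq V] (G : SimpleGraph V)
    [DecidableRel G.Adj] (x z : V → ℝ) :
    x ⬝ᵥ (G.adjMatrix ℝ *ᵥ z) = (G.adjMatrix ℝ *ᵥ x) ⬝ᵥ z := by
  rw [Matrix.dotProduct_mulVec, ← Matrix.mulVec_transpose, G.transpose_adjMatrix]

lemma eigvec_const {V : Type*} [Fintype V] [DecidableEq V] (G : SimpleGraph V)
    [DecidableRel G.Adj] (hconn : G.Connected) (d : ℕ) (hreg : G.IsRegularOfDegree d)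
    (u : V → ℝ) (hu : G.adjMatrix ℝ *ᵥ u = (d : ℝ) • u) (v w : V) : u v = u w := by
  have hL : Matrix.toLin' (G.lapMatrix ℝ) u = 0 := by
    rw [Matrix.toLin'_apply]
    ext a
    have h1 : (G.adjMatrix ℝ *ᵥ u) a = (d : ℝ) * u a := by rw [hu]; simp
    have h2 : (G.degMatrix ℝ *ᵥ u) a = (d : ℝ) * u a := by
      rw [G.degMatrix_mulVec_apply]; rw [hreg a]
    simp [SimpleGraph.lapMatrix, Matrix.sub_mulVec, h1, h2]
  exact ((G.lapMatrix_mulVec_eq_zero_iff_forall_reachable (x := u)).mp hL) v w (hconn v w)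

lemma key_spectral {V : Type*} [Fintype V] [DecidableEq V] [Nonempty V] (G : SimpleGraph V)
    [DecidableRel G.Adj] (hconn : G.Connected) (d : ℕ) (hreg : G.IsRegularOfDegree d)
    (lam : ℝ)
    (hspec : ∀ μ ∈ spectrum ℝ (SimpleGraph.adjMatrix ℝ G), μ ≠ (d : ℝ) → |μ| ≤ lam)
    (y : V → ℝ) (hy : ∑ v, y v = 0) :
    ∑ v, (G.adjMatrix ℝ *ᵥ y) v ^ 2 ≤ lam ^ 2 * ∑ v, y v ^ 2 := by
  have hA : (G.adjMatrix ℝ).IsHermitian := by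
    rw [Matrix.IsHermitian, Matrix.conjTranspose_eq_transpose_of_trivial]
    exact G.isSymm_adjMatrix
  set b := hA.eigenvectorBasis with hb
  set μ := hA.eigenvalues with hμdef
  have h_inner : ∀ (x z : EuclideanSpace ℝ V), ⟪x, z⟫_ℝ = ∑ v, x v * z v := by
    intro x z; simp [PiLp.inner_apply, RCLike.inner_apply, conj_trivial, mul_comm]
  have hAb : ∀ j, G.adjMatrix ℝ *ᵥ (fun v => b j v) = μ j • (fun v => b j v) :=
    fun j => hA.mulVec_eigenvectorBasis j
  set yE : EuclideanSpace ℝ V := WithLp.toLp 2 y with hyE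
  set AyE : EuclideanSpace ℝ V := WithLp.toLp 2 (G.adjMatrix ℝ *ᵥ y) with hAyE
  have hc_eig : ∀ j, ⟪b j, AyE⟫_ℝ = μ j * ⟪b j, yE⟫_ℝ := by
    intro j
    rw [h_inner, h_inner]
    have e1 : ∑ v, (b j) v * AyE v = (fun v => b j v) ⬝ᵥ (G.adjMatrix ℝ *ᵥ y) := rfl
    rw [e1, adj_dot_sym, hAb j, smul_dotProduct]
    rfl
  have hP1 : ∑ v, (G.adjMatrix ℝ *ᵥ y) v ^ 2 = ∑ j, (μ j * ⟪b j, yE⟫_ℝ) ^ 2 := by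
    have hpar := b.sum_inner_mul_inner AyE AyE
    rw [h_inner AyE AyE] at hpar
    calc ∑ v, (G.adjMatrix ℝ *ᵥ y) v ^ 2 = ∑ v, AyE v * AyE v := by
          apply Finset.sum_congr rfl; intro v _; rw [sq]
      _ = ∑ j, ⟪AyE, b j⟫_ℝ * ⟪b j, AyE⟫_ℝ := hpar.symm
      _ = ∑ j, (μ j * ⟪b j, yE⟫_ℝ) ^ 2 := by
          apply Finset.sum_congr rfl; intro j _
          have e : ⟪AyE, b j⟫_ℝ = μ j * ⟪b j, yE⟫_ℝ := by
            rw [real_inner_comm]; exact hc_eig j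
          rw [e, hc_eig j]; ring
  have hP2 : ∑ v, y v ^ 2 = ∑ j, ⟪b j, yE⟫_ℝ ^ 2 := by
    have hpar := b.sum_inner_mul_inner yE yE
    rw [h_inner yE yE] at hpar
    calc ∑ v, y v ^ 2 = ∑ v, yE v * yE v := by
          apply Finset.sum_congr rfl; intro v _; rw [sq]
      _ = ∑ j, ⟪yE, b j⟫_ℝ * ⟪b j, yE⟫_ℝ := hpar.symm
      _ = ∑ j, ⟪b j, yE⟫_ℝ ^ 2 := by
          apply Finset.sum_congr rfl; intro j _
          have e : ⟪yE, b j⟫_ℝ = ⟪b j, yE⟫_ℝ := real_inner_comm _ _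
          rw [e]; ring
  rw [hP1, hP2, Finset.mul_sum]
  apply Finset.sum_le_sum
  intro j _
  by_cases hμ : μ j = (d : ℝ)
  · have h' : G.adjMatrix ℝ *ᵥ (fun v => b j v) = (d : ℝ) • (fun v => b j v) := by
      rw [hAb j, hμ]
    have hconst : ∀ v w, b j v = b j w := fun v w => eigvec_const G hconn d hreg _ h' v w
    have hcj : ⟪b j, yE⟫_ℝ = 0 := by
      obtain ⟨v0⟩ := (inferInstance : Nonempty V)
      rw [h_inner]
      have e : ∑ v, b j v * yE v = ∑ v, b j v0 * yE v :=
        Finset.sum_congr rfl fun v _ => by rw [hconst v v0]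
      rw [e, ← Finset.mul_sum, hy, mul_zero]
    rw [hcj]
    simp
  · have habs := hspec (μ j) (hA.eigenvalues_mem_spectrum_real j) hμ
    have h2 : μ j ^ 2 ≤ lam ^ 2 := by
      calc μ j ^ 2 = |μ j| ^ 2 := (sq_abs _).symm
        _ ≤ lam ^ 2 := pow_le_pow_left₀ (abs_nonneg _) habs 2
    calc (μ j * ⟪b j, yE⟫_ℝ) ^ 2 = μ j ^ 2 * ⟪b j, yE⟫_ℝ ^ 2 := by ring
      _ ≤ lam ^ 2 * ⟪b j, yE⟫_ℝ ^ 2 := mul_le_mul_of_nonneg_right h2 (sq_nonneg _)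

/-- Tanner's vertex-expansion theorem: if `G` is a finite connected `d`-regular
graph on `n` vertices whose adjacency-matrix eigenvalues other than the largest
one `d` all have absolute value at most `lam < d`, then every vertex set `S`
with `|S| ≤ n/2` satisfies
`|N(S)| ≥ |S| / ( lam²/d² + (1 − lam²/d²)·|S|/n )`. -/
theorem stmt7 {V : Type*} [Fintype V] [DecidableEq V] (G : SimpleGraph V)
    [DecidableRel G.Adj] (hconn : G.Connected)
    (d : ℕ) (hreg : G.IsRegularOfDegree d)
    (n : ℕ) (hn : Fintype.card V = n)
    (lam : ℝ) (hlam : lam < d)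
    (hspec : ∀ μ ∈ spectrum ℝ (SimpleGraph.adjMatrix ℝ G), μ ≠ (d : ℝ) → |μ| ≤ lam)
    (S : Set V) (hS : (S.ncard : ℝ) ≤ n / 2) :
    (S.ncard : ℝ) / (lam ^ 2 / d ^ 2 + (1 - lam ^ 2 / d ^ 2) * (S.ncard / n)) ≤
      (nbhd G S).ncard := by
  classical
  by_cases hs0 : S.ncard = 0
  · rw [hs0]
    simp
  have hs1 : 1 ≤ S.ncard := Nat.one_le_iff_ne_zero.mpr hs0
  set s : ℝ := (S.ncard : ℝ) with hsdef
  set t : ℝ := ((nbhd G S).ncard : ℝ) with htdef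
  have hs1' : (1 : ℝ) ≤ s := by rw [hsdef]; exact_mod_cast hs1
  have hn2 : (2 : ℝ) ≤ (n : ℝ) := by linarith
  have hn0 : (0 : ℝ) < (n : ℝ) := by linarith
  have hnne : (n : ℝ) ≠ 0 := ne_of_gt hn0
  haveI hnV : Nonempty V := by
    rw [← Fintype.card_pos_iff, hn]
    have : (2 : ℕ) ≤ n := by exact_mod_cast hn2
    omega
  have hd1 : 1 ≤ d := by
    have hcard : 1 < Fintype.card V := by
      rw [hn]; have : (2 : ℕ) ≤ n := by exact_mod_cast hn2
      omega
    obtain ⟨v, w, hvw⟩ := Fintype.exists_pair_of_one_lt_card hcard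
    obtain ⟨p⟩ := hconn v w
    cases p with
    | nil => exact absurd rfl hvw
    | cons h _ =>
      have := (G.degree_pos_iff_exists_adj v).mpr ⟨_, h⟩
      rw [hreg v] at this
      omega
  have hd0 : (0 : ℝ) < (d : ℝ) := by exact_mod_cast hd1
  have hdne : (d : ℝ) ≠ 0 := ne_of_gt hd0
  set χ : V → ℝ := fun u => if u ∈ S then (1 : ℝ) else 0 with hχ
  have hχsum : ∑ v, χ v = s := by
    rw [hχ, Finset.sum_boole, hsdef, Set.ncard_eq_toFinset_card' S]
    congr 1
    simp [Set.toFinset]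
  have hχsq : ∀ v, χ v ^ 2 = χ v := by
    intro v; by_cases h : v ∈ S <;> simp [hχ, h]
  set y : V → ℝ := fun v => χ v - s / n with hy
  have hysum : ∑ v, y v = 0 := by
    rw [hy]
    rw [Finset.sum_sub_distrib, hχsum, Finset.sum_const, Finset.card_univ, hn, nsmul_eq_mul]
    field_simp; ring
  have hconstmul : ∀ a : ℝ, G.adjMatrix ℝ *ᵥ (fun _ => a) = fun _ => (d : ℝ) * a := by
    intro a; funext v
    exact G.adjMatrix_mulVec_const_apply_of_regular hreg
  have hχy : χ = y + (fun _ => s / n) := by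
    funext v; simp [hy]
  have hAχ : ∀ v, (G.adjMatrix ℝ *ᵥ χ) v = (G.adjMatrix ℝ *ᵥ y) v + (d : ℝ) * (s / n) := by
    intro v
    rw [hχy, Matrix.mulVec_add, hconstmul (s / n)]
    simp
  have hAy0 : ∑ v, (G.adjMatrix ℝ *ᵥ y) v = 0 := by
    have h1 : ∑ v, (G.adjMatrix ℝ *ᵥ y) v = (fun _ => (1 : ℝ)) ⬝ᵥ (G.adjMatrix ℝ *ᵥ y) := by
      simp [dotProduct]
    rw [h1, adj_dot_sym, hconstmul 1]
    simp only [dotProduct, mul_one]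
    rw [← Finset.mul_sum, hysum, mul_zero]
  have hsumx : ∑ v, (G.adjMatrix ℝ *ᵥ χ) v = (d : ℝ) * s := by
    calc ∑ v, (G.adjMatrix ℝ *ᵥ χ) v
        = ∑ v, ((G.adjMatrix ℝ *ᵥ y) v + (d : ℝ) * (s / n)) :=
          Finset.sum_congr rfl fun v _ => hAχ v
      _ = (∑ v, (G.adjMatrix ℝ *ᵥ y) v) + (Fintype.card V : ℝ) * ((d : ℝ) * (s / n)) := by
          rw [Finset.sum_add_distrib, Finset.sum_const, Finset.card_univ, nsmul_eq_mul]
      _ = (d : ℝ) * s := by rw [hAy0, hn]; field_simp; ring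
  have hx2 : ∑ v, (G.adjMatrix ℝ *ᵥ χ) v ^ 2
      = (∑ v, (G.adjMatrix ℝ *ᵥ y) v ^ 2) + (d : ℝ) ^ 2 * s ^ 2 / n := by
    calc ∑ v, (G.adjMatrix ℝ *ᵥ χ) v ^ 2
        = ∑ v, ((G.adjMatrix ℝ *ᵥ y) v ^ 2
            + 2 * ((d : ℝ) * (s / n)) * (G.adjMatrix ℝ *ᵥ y) v + ((d : ℝ) * (s / n)) ^ 2) :=
          Finset.sum_congr rfl fun v _ => by rw [hAχ v]; ring
      _ = (∑ v, (G.adjMatrix ℝ *ᵥ y) v ^ 2)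
            + 2 * ((d : ℝ) * (s / n)) * (∑ v, (G.adjMatrix ℝ *ᵥ y) v)
            + (Fintype.card V : ℝ) * ((d : ℝ) * (s / n)) ^ 2 := by
          rw [Finset.sum_add_distrib, Finset.sum_add_distrib, ← Finset.mul_sum,
            Finset.sum_const, Finset.card_univ, nsmul_eq_mul]
      _ = (∑ v, (G.adjMatrix ℝ *ᵥ y) v ^ 2) + (d : ℝ) ^ 2 * s ^ 2 / n := by
          rw [hAy0, hn]; field_simp; ring
  have hy2 : ∑ v, y v ^ 2 = s - s ^ 2 / n := by
    calc ∑ v, y v ^ 2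
        = ∑ v, (χ v ^ 2 - 2 * (s / n) * χ v + (s / n) ^ 2) :=
          Finset.sum_congr rfl fun v _ => by rw [hy]; ring
      _ = (∑ v, χ v ^ 2) - 2 * (s / n) * (∑ v, χ v) + (Fintype.card V : ℝ) * (s / n) ^ 2 := by
          rw [Finset.sum_add_distrib, Finset.sum_sub_distrib, ← Finset.mul_sum,
            Finset.sum_const, Finset.card_univ, nsmul_eq_mul]
      _ = s - s ^ 2 / n := by
          have : ∑ v, χ v ^ 2 = s := by
            rw [← hχsum]; exact Finset.sum_congr rfl fun v _ => hχsq v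
          rw [this, hχsum, hn]; field_simp; ring
  have hkey := key_spectral G hconn d hreg lam hspec y hysum
  rw [hy2] at hkey
  -- Cauchy–Schwarz step
  set N : Finset V := (nbhd G S).toFinset with hN
  have htN : (N.card : ℝ) = t := by
    rw [htdef, hN, Set.ncard_eq_toFinset_card']
  have hx0 : ∀ v, v ∉ nbhd G S → (G.adjMatrix ℝ *ᵥ χ) v = 0 := by
    intro v hv
    rw [G.adjMatrix_mulVec_apply]
    apply Finset.sum_eq_zero
    intro u hu
    rw [SimpleGraph.mem_neighborFinset] at hu
    by_cases huS : u ∈ S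
    · exact absurd ⟨u, huS, G.adj_symm hu⟩ hv
    · simp [hχ, huS]
  have hNsum : ∑ v ∈ N, (G.adjMatrix ℝ *ᵥ χ) v = (d : ℝ) * s := by
    rw [← hsumx]
    apply Finset.sum_subset (Finset.subset_univ N)
    intro v _ hv
    exact hx0 v (by simpa [hN, Set.mem_toFinset] using hv)
  have hCS : ((d : ℝ) * s) ^ 2 ≤ (N.card : ℝ) * ∑ v ∈ N, (G.adjMatrix ℝ *ᵥ χ) v ^ 2 := by
    rw [← hNsum]
    exact sq_sum_le_card_mul_sum_sq
  have ht0 : (0 : ℝ) ≤ t := by rw [htdef]; positivity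
  have hCS2 : ((d : ℝ) * s) ^ 2 ≤ t * (lam ^ 2 * (s - s ^ 2 / n) + (d : ℝ) ^ 2 * s ^ 2 / n) := by
    calc ((d : ℝ) * s) ^ 2
        ≤ (N.card : ℝ) * ∑ v ∈ N, (G.adjMatrix ℝ *ᵥ χ) v ^ 2 := hCS
      _ ≤ t * ∑ v, (G.adjMatrix ℝ *ᵥ χ) v ^ 2 := by
          rw [htN]
          apply mul_le_mul_of_nonneg_left _ ht0
          exact Finset.sum_le_sum_of_subset_of_nonneg (Finset.subset_univ N)
            (fun _ _ _ => sq_nonneg _)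
      _ ≤ t * (lam ^ 2 * (s - s ^ 2 / n) + (d : ℝ) ^ 2 * s ^ 2 / n) := by
          apply mul_le_mul_of_nonneg_left _ ht0
          rw [hx2]
          linarith [hkey]
  -- final arithmetic
  have hsn : s ^ 2 / n ≤ s / 2 := by
    rw [div_le_div_iff₀ hn0 two_pos]
    nlinarith
  have hD : 0 < lam ^ 2 * (s - s ^ 2 / n) + (d : ℝ) ^ 2 * s ^ 2 / n := by
    have h1 : 0 ≤ lam ^ 2 * (s - s ^ 2 / n) :=
      mul_nonneg (sq_nonneg _) (by linarith)
    have h2 : 0 < (d : ℝ) ^ 2 * s ^ 2 / n := by positivity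
    linarith
  have hEpos : 0 < lam ^ 2 / (d : ℝ) ^ 2 + (1 - lam ^ 2 / (d : ℝ) ^ 2) * (s / n) := by
    have hid : lam ^ 2 / (d : ℝ) ^ 2 + (1 - lam ^ 2 / (d : ℝ) ^ 2) * (s / n)
        = (lam ^ 2 * (s - s ^ 2 / n) + (d : ℝ) ^ 2 * s ^ 2 / n) / ((d : ℝ) ^ 2 * s) := by
      field_simp
      ring
    rw [hid]
    exact div_pos hD (by positivity)
  rw [div_le_iff₀ hEpos]
  have hid2 : t * (lam ^ 2 * (s - s ^ 2 / n) + (d : ℝ) ^ 2 * s ^ 2 / n)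
      = ((d : ℝ) ^ 2 * s) * (t * (lam ^ 2 / (d : ℝ) ^ 2 + (1 - lam ^ 2 / (d : ℝ) ^ 2) * (s / n))) := by
    field_simp
    ring
  have hds : 0 < (d : ℝ) ^ 2 * s := by positivity
  have hfinal : ((d : ℝ) ^ 2 * s) * s
      ≤ ((d : ℝ) ^ 2 * s) * (t * (lam ^ 2 / (d : ℝ) ^ 2 + (1 - lam ^ 2 / (d : ℝ) ^ 2) * (s / n))) := by
    calc ((d : ℝ) ^ 2 * s) * s = ((d : ℝ) * s) ^ 2 := by ring
      _ ≤ t * (lam ^ 2 * (s - s ^ 2 / n) + (d : ℝ) ^ 2 * s ^ 2 / n) := hCS2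
      _ = _ := hid2
  exact le_of_mul_le_mul_left hfinal hds
end

section
/- Let G be a finite connected d-regular graph on n vertices whose adjacency matrix A satisfies |λ_i| ≤ ε·d for every eigenvalue λ_i of A other than the largest one d, where ε < 1 (i.e. G is an ε-expander graph). Then for every δ ≤ 1/2 and every set S of vertices with |S| ≤ δ·n, the neighborhood satisfies |N(S)| ≥ |S| / ( ε²(1−δ) + δ ). -/
open scoped RealInnerProductSpace
open Matrix

section aux

variable {V : Type*} [Fintype V] [DecidableEq V] (G : SimpleGraph V) [DecidableRel G.Adj]

lemma aux_inner (x y : EuclideanSpace ℝ V) : ⟪x, y⟫ = ∑ v, x v * y v := by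
  simp [PiLp.inner_apply, RCLike.inner_apply, conj_trivial]
  exact Finset.sum_congr rfl (fun _ _ => mul_comm _ _)

lemma aux_herm : (G.adjMatrix ℝ).IsHermitian := by
  rw [Matrix.IsHermitian, Matrix.conjTranspose]
  ext i j
  simp [SimpleGraph.adjMatrix_apply, SimpleGraph.adj_comm]

lemma aux_sym (x y : V → ℝ) :
    ∑ v, x v * (G.adjMatrix ℝ *ᵥ y) v = ∑ v, (G.adjMatrix ℝ *ᵥ x) v * y v := by
  have h1 : ∑ v, x v * (G.adjMatrix ℝ *ᵥ y) v = x ⬝ᵥ (G.adjMatrix ℝ *ᵥ y) := rfl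
  have h2 : ∑ v, (G.adjMatrix ℝ *ᵥ x) v * y v = (G.adjMatrix ℝ *ᵥ x) ⬝ᵥ y := rfl
  rw [h1, h2, Matrix.dotProduct_mulVec, ← Matrix.mulVec_transpose,
    SimpleGraph.transpose_adjMatrix]

lemma aux_const (hconn : G.Connected) (d : ℕ) (hreg : G.IsRegularOfDegree d)
    (x : V → ℝ) (hx : G.adjMatrix ℝ *ᵥ x = (d : ℝ) • x) (v w : V) : x v = x w := by
  have h0 : Matrix.toLin' (G.lapMatrix ℝ) x = 0 := by
    rw [Matrix.toLin'_apply]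
    ext u
    have h1 : (G.adjMatrix ℝ *ᵥ x) u = (d : ℝ) * x u := by rw [hx]; simp
    have h2 : ∑ t ∈ G.neighborFinset u, x t = (d : ℝ) * x u := by
      rw [← h1, SimpleGraph.adjMatrix_mulVec_apply]
    rw [SimpleGraph.lapMatrix_mulVec_apply, h2, hreg u]
    simp
  exact (G.lapMatrix_mulVec_eq_zero_iff_forall_reachable.mp (by rwa [Matrix.toLin'_apply] at h0)) v w (hconn v w)

end aux

set_option maxHeartbeats 2000000 in
/-- If `G` is a finite connected `d`-regular graph on `n` vertices which is an
`ε`-expander (all adjacency-matrix eigenvalues other than the largest one `d`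
have absolute value at most `ε·d`, with `ε < 1`), then for every `δ ≤ 1/2` and
every vertex set `S` with `|S| ≤ δ·n` one has
`|N(S)| ≥ |S| / ( ε²(1−δ) + δ )`. -/
theorem stmt8 {V : Type*} [Fintype V] [DecidableEq V] (G : SimpleGraph V)
    [DecidableRel G.Adj] (hconn : G.Connected)
    (d : ℕ) (hreg : G.IsRegularOfDegree d)
    (n : ℕ) (hn : Fintype.card V = n)
    (ε : ℝ) (hε : ε < 1)
    (hspec : ∀ μ ∈ spectrum ℝ (SimpleGraph.adjMatrix ℝ G), μ ≠ (d : ℝ) → |μ| ≤ ε * d)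
    (δ : ℝ) (hδ : δ ≤ 1 / 2)
    (S : Set V) (hS : (S.ncard : ℝ) ≤ δ * n) :
    (S.ncard : ℝ) / (ε ^ 2 * (1 - δ) + δ) ≤ (nbhd G S).ncard := by
  classical
  have hNS0 : (0 : ℝ) ≤ ((nbhd G S).ncard : ℝ) := Nat.cast_nonneg _
  rcases S.eq_empty_or_nonempty with rfl | hSne
  · simpa using hNS0
  -- basic numeric facts
  have hVne : Nonempty V := hconn.nonempty
  set s : ℝ := (S.ncard : ℝ) with hsdef
  have hs1 : 1 ≤ s := by
    have h := (Set.ncard_pos S.toFinite).mpr hSne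
    have h2 : 1 ≤ S.ncard := h
    rw [hsdef]
    exact_mod_cast h2
  have hn1 : 1 ≤ n := by rw [← hn]; exact Fintype.card_pos
  have hnpos : (0 : ℝ) < (n : ℝ) := by exact_mod_cast hn1
  have hδpos : 0 < δ := by nlinarith
  have hn2 : (2 : ℝ) ≤ (n : ℝ) := by nlinarith
  have hcard2 : 1 < Fintype.card V := by rw [hn]; exact_mod_cast hn2
  -- positive degree
  obtain ⟨v0⟩ := hVne
  have hdpos : 0 < d := by
    obtain ⟨w0, hw0⟩ := Fintype.exists_ne_of_one_lt_card hcard2 v0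
    obtain ⟨p⟩ := hconn w0 v0
    cases p with
    | nil => exact absurd rfl hw0
    | cons h q =>
      rw [← hreg w0]
      rw [G.degree_pos_iff_exists_adj]
      exact ⟨_, h⟩
  have hd1 : (1 : ℝ) ≤ (d : ℝ) := by exact_mod_cast hdpos
  -- spectral setup
  have hA : (G.adjMatrix ℝ).IsHermitian := aux_herm G
  set b := hA.eigenvectorBasis with hbdef
  set lam := hA.eigenvalues with hlamdef
  set B : V → V → ℝ := fun i v => b i v with hBdef
  have hAb : ∀ i, G.adjMatrix ℝ *ᵥ B i = lam i • B i := by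
    intro i
    funext v
    have h := congrFun (hA.mulVec_eigenvectorBasis i) v
    exact h
  have hinnerB : ∀ (i : V) (x : EuclideanSpace ℝ V), ⟪b i, x⟫ = ∑ v, B i v * x v :=
    fun i x => aux_inner (b i) x
  have hspecmem : ∀ i, lam i ∈ spectrum ℝ (SimpleGraph.adjMatrix ℝ G) :=
    fun i => hA.eigenvalues_mem_spectrum_real i
  -- all-ones vector is an eigenvector of eigenvalue d
  set u1 : EuclideanSpace ℝ V := WithLp.toLp 2 (fun _ => 1 : V → ℝ) with hu1def
  have hAu1 : G.adjMatrix ℝ *ᵥ (u1 : V → ℝ) = (d : ℝ) • (u1 : V → ℝ) := by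
    ext v
    rw [SimpleGraph.adjMatrix_mulVec_apply]
    simp [hu1def, hreg v]
  -- inner product of b i with (A *ᵥ x)
  have hbA : ∀ (i : V) (x : V → ℝ),
      ∑ v, B i v * (G.adjMatrix ℝ *ᵥ x) v = lam i * ∑ v, B i v * x v := by
    intro i x
    rw [aux_sym, hAb i]
    simp [Finset.mul_sum, Finset.sum_congr, Pi.smul_apply, smul_eq_mul, mul_assoc]
  -- eigenvectors of eigenvalue d are constant
  have hconstfun : ∀ i, lam i = (d : ℝ) → ∀ v, B i v = B i v0 := by
    intro i hi v
    exact aux_const G hconn d hreg (B i) (by rw [hAb i, hi]) v v0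
  -- orthonormality facts
  have hbnorm : ∀ i, ∑ v, B i v * B i v = 1 := by
    intro i
    have h := hinnerB i (b i)
    rw [real_inner_self_eq_norm_sq] at h
    rw [← h]
    simp [b.orthonormal.1 i]
  have hborth : ∀ i j, i ≠ j → ∑ v, B i v * B j v = 0 := by
    intro i j hij
    rw [← hinnerB i (b j)]
    exact b.orthonormal.2 hij
  clear_value b lam B
  -- uniqueness of the d-eigenvalue index
  have huniq : ∀ i j, lam i = (d : ℝ) → lam j = (d : ℝ) → i = j := by
    intro i j hi hj
    by_contra hij
    have hti : ((Fintype.card V : ℝ)) * (B i v0 * B i v0) = 1 := by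
      rw [← hbnorm i, Finset.sum_congr rfl (fun v _ => by rw [hconstfun i hi v])]
      simp [Finset.card_univ, mul_comm]
    have htj : ((Fintype.card V : ℝ)) * (B j v0 * B j v0) = 1 := by
      rw [← hbnorm j, Finset.sum_congr rfl (fun v _ => by rw [hconstfun j hj v])]
      simp [Finset.card_univ, mul_comm]
    have htij : ((Fintype.card V : ℝ)) * (B i v0 * B j v0) = 0 := by
      rw [← hborth i j hij,
        Finset.sum_congr rfl (fun v _ => by rw [hconstfun i hi v, hconstfun j hj v])]
      simp [Finset.card_univ, mul_comm]
    nlinarith [hti, htj, htij]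
  -- existence of the d-eigenvalue index
  have hexist : ∃ i, lam i = (d : ℝ) := by
    by_contra hne
    push_neg at hne
    have hc0 : ∀ i, ∑ v, B i v * u1 v = 0 := by
      intro i
      have h1 : lam i * ∑ v, B i v * u1 v = (d : ℝ) * ∑ v, B i v * u1 v := by
        rw [← hbA i u1, hAu1]
        simp only [PiLp.smul_apply, Pi.smul_apply, smul_eq_mul, Finset.mul_sum]
        exact Finset.sum_congr rfl (fun v _ => by ring)
      have h2 : (lam i - (d : ℝ)) * (∑ v, B i v * u1 v) = 0 := by nlinarith [h1]
      rcases mul_eq_zero.mp h2 with h | h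
      · exact absurd (by linarith) (hne i)
      · exact h
    have hP : ⟪(u1 : EuclideanSpace ℝ V), u1⟫ = 0 := by
      rw [← b.sum_inner_mul_inner u1 u1]
      apply Finset.sum_eq_zero
      intro i _
      have h0 : ⟪b i, (u1 : EuclideanSpace ℝ V)⟫ = 0 := by rw [hinnerB]; exact hc0 i
      rw [h0, mul_zero]
    rw [aux_inner] at hP
    simp [hu1def, Finset.card_univ] at hP
    rw [hn] at hP
    linarith
  obtain ⟨i0, hi0⟩ := hexist
  -- the top eigenvector is constant, with square 1/n
  have ht : ((n : ℝ)) * (B i0 v0 * B i0 v0) = 1 := by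
    rw [← hbnorm i0, Finset.sum_congr rfl (fun v _ => by rw [hconstfun i0 hi0 v])]
    simp [Finset.card_univ, hn, mul_comm]
  -- indicator vector of S and its image
  set f : EuclideanSpace ℝ V := WithLp.toLp 2 (fun v => if v ∈ S then (1 : ℝ) else 0 : V → ℝ) with hfdef
  set g : EuclideanSpace ℝ V := WithLp.toLp 2 (G.adjMatrix ℝ *ᵥ (f : V → ℝ) : V → ℝ) with hgdef
  set c : V → ℝ := fun i => ∑ v, B i v * f v with hcdef
  have hfsum : ∑ v, (f : V → ℝ) v = s := by
    have h1 : ∑ v, (f : V → ℝ) v = ∑ v ∈ S.toFinset, (f : V → ℝ) v :=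
      (Finset.sum_subset (Finset.subset_univ _)
        (fun x _ hx => by
          have hxS : x ∉ S := fun h => hx (Set.mem_toFinset.mpr h)
          simp [hfdef, hxS])).symm
    have h2 : ∀ v ∈ S.toFinset, (f : V → ℝ) v = 1 := fun v hv => by
      simp [hfdef, Set.mem_toFinset.mp hv]
    rw [h1, Finset.sum_congr rfl h2]
    simp [hsdef, Set.ncard_eq_toFinset_card']
  have hff : ∑ v, (f : V → ℝ) v * f v = s := by
    rw [← hfsum]
    exact Finset.sum_congr rfl (fun v _ => by by_cases h : v ∈ S <;> simp [hfdef, h])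
  have hci0 : c i0 = B i0 v0 * s := by
    have h2 : ∀ v ∈ Finset.univ, B i0 v * (f : V → ℝ) v = B i0 v0 * f v := fun v _ => by
      rw [hconstfun i0 hi0 v]
    calc c i0 = ∑ v, B i0 v0 * (f : V → ℝ) v := Finset.sum_congr rfl h2
      _ = B i0 v0 * s := by rw [← Finset.mul_sum, hfsum]
  -- Parseval for f
  have hParse_f : ∑ i, c i * c i = s := by
    have hterm : ∀ i : V, ⟪(f : EuclideanSpace ℝ V), b i⟫ * ⟪b i, (f : EuclideanSpace ℝ V)⟫
        = c i * c i := by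
      intro i
      have h1 : ⟪b i, (f : EuclideanSpace ℝ V)⟫ = c i := hinnerB i f
      rw [real_inner_comm, h1]
    have h := b.sum_inner_mul_inner (f : EuclideanSpace ℝ V) f
    rw [Finset.sum_congr rfl (fun i _ => hterm i), aux_inner f f, hff] at h
    exact h
  -- Parseval for g
  have hbg : ∀ i, ∑ v, B i v * g v = lam i * c i := fun i => hbA i f
  have hParse_g : ∑ i, (lam i * c i) * (lam i * c i) = ∑ v, g v * g v := by
    have hterm : ∀ i : V, ⟪g, b i⟫ * ⟪b i, g⟫ = (lam i * c i) * (lam i * c i) := by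
      intro i
      have h1 : ⟪b i, g⟫ = lam i * c i := by rw [hinnerB i g]; exact hbg i
      rw [real_inner_comm, h1]
    have h := b.sum_inner_mul_inner g g
    rw [Finset.sum_congr rfl (fun i _ => hterm i), aux_inner g g] at h
    exact h
  clear_value f g c
  -- eigenvalue bound away from the top eigenvalue
  have hub : ∀ i, i ≠ i0 → (lam i * c i) * (lam i * c i) ≤ (ε * d) ^ 2 * (c i * c i) := by
    intro i hii0
    have hlne : lam i ≠ (d : ℝ) := fun h => hii0 (huniq i i0 h hi0)
    have hls : |lam i| ≤ ε * d :=
      hspec (lam i) (hspecmem i) hlne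
    have h1 := abs_le.mp hls
    have hl2 : lam i ^ 2 ≤ (ε * d) ^ 2 := by nlinarith [h1.1, h1.2]
    nlinarith [mul_le_mul_of_nonneg_right hl2 (mul_self_nonneg (c i))]
  -- ε is nonnegative, so ε^2 ≤ 1
  have hε0 : 0 ≤ ε := by
    obtain ⟨i1, hi1⟩ := Fintype.exists_ne_of_one_lt_card hcard2 i0
    have hlne : lam i1 ≠ (d : ℝ) := fun h => hi1 (huniq i1 i0 h hi0)
    have hls : |lam i1| ≤ ε * d :=
      hspec (lam i1) (hspecmem i1) hlne
    nlinarith [abs_nonneg (lam i1)]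
  have hε2 : ε ^ 2 ≤ 1 := by nlinarith
  -- the spectral bound on ‖g‖²
  have hti0 : B i0 v0 * B i0 v0 = 1 / (n : ℝ) := by
    field_simp
    linarith [ht]
  have herase : ∑ i ∈ Finset.univ.erase i0, c i * c i = s - s * (s / n) := by
    have h := Finset.add_sum_erase Finset.univ (fun i => c i * c i) (Finset.mem_univ i0)
    have hc2 : c i0 * c i0 = s * (s / n) := by
      rw [hci0]
      field_simp
      nlinarith [ht]
    rw [hParse_f] at h
    beta_reduce at h
    linarith [h, hc2]
  have hsplit : ∑ i, (lam i * c i) * (lam i * c i) ≤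
      (d : ℝ) ^ 2 * (s * (s / n)) + (ε * d) ^ 2 * (s - s * (s / n)) := by
    rw [← Finset.add_sum_erase Finset.univ (fun i => (lam i * c i) * (lam i * c i))
      (Finset.mem_univ i0)]
    have h1 : (lam i0 * c i0) * (lam i0 * c i0) = (d : ℝ) ^ 2 * (s * (s / n)) := by
      rw [hi0, hci0]
      field_simp
      linear_combination ht
    have h2 : ∑ i ∈ Finset.univ.erase i0, (lam i * c i) * (lam i * c i) ≤
        (ε * d) ^ 2 * (s - s * (s / n)) := by
      calc ∑ i ∈ Finset.univ.erase i0, (lam i * c i) * (lam i * c i)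
          ≤ ∑ i ∈ Finset.univ.erase i0, (ε * d) ^ 2 * (c i * c i) :=
            Finset.sum_le_sum (fun i hi => hub i (Finset.ne_of_mem_erase hi))
        _ = (ε * d) ^ 2 * ∑ i ∈ Finset.univ.erase i0, c i * c i := by
            rw [Finset.mul_sum]
        _ = (ε * d) ^ 2 * (s - s * (s / n)) := by rw [herase]
    linarith [h1, h2]
  -- support and sum of g
  have hg0 : ∀ w, w ∉ (nbhd G S).toFinset → g w = 0 := by
    intro w hw
    rw [hgdef, WithLp.ofLp_toLp]
    rw [SimpleGraph.adjMatrix_mulVec_apply]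
    apply Finset.sum_eq_zero
    intro u hu
    have hadj : G.Adj u w := G.adj_symm ((SimpleGraph.mem_neighborFinset G w u).mp hu)
    have huS : u ∉ S := by
      intro huS
      exact hw (Set.mem_toFinset.mpr ⟨u, huS, hadj⟩)
    simp [hfdef, huS]
  have hgnn : ∀ w, 0 ≤ g w := by
    intro w
    rw [hgdef, WithLp.ofLp_toLp, SimpleGraph.adjMatrix_mulVec_apply]
    apply Finset.sum_nonneg
    intro u _
    by_cases h : u ∈ S <;> simp [hfdef, h]
  have hgsum : ∑ v, g v = (d : ℝ) * s := by
    have h1 : ∑ v, (u1 : V → ℝ) v * g v = ∑ v, g v := by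
      exact Finset.sum_congr rfl (fun v _ => by simp [hu1def])
    rw [← h1, hgdef, aux_sym, hAu1]
    rw [Finset.sum_congr rfl (fun v _ => by
      rw [show ((d : ℝ) • (u1 : V → ℝ)) v * f v = (d : ℝ) * f v by
        simp [hu1def]])]
    rw [← Finset.mul_sum, hfsum]
  -- Cauchy–Schwarz on the support of g
  set N : ℝ := ((nbhd G S).ncard : ℝ) with hNdef
  have hTS : (((nbhd G S).toFinset.card : ℕ) : ℝ) = N := by
    rw [hNdef, Set.ncard_eq_toFinset_card']
  have hCS : ((d : ℝ) * s) ^ 2 ≤ N * ∑ v, g v * g v := by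
    have h1 : ∑ w ∈ (nbhd G S).toFinset, g w = ∑ v, g v :=
      Finset.sum_subset (Finset.subset_univ _) (fun x _ hx => hg0 x hx)
    have h2 := sq_sum_le_card_mul_sum_sq (s := (nbhd G S).toFinset) (f := g)
    have h3 : ∑ w ∈ (nbhd G S).toFinset, g w ^ 2 ≤ ∑ v, g v ^ 2 :=
      Finset.sum_le_sum_of_subset_of_nonneg (Finset.subset_univ _)
        (fun v _ _ => sq_nonneg (g v))
    have h4 : ∑ v, g v ^ 2 = ∑ v, g v * g v :=
      Finset.sum_congr rfl (fun v _ => by ring)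
    rw [h1] at h2
    rw [hgsum] at h2
    calc ((d : ℝ) * s) ^ 2 ≤ ((nbhd G S).toFinset.card : ℝ) * ∑ w ∈ (nbhd G S).toFinset, g w ^ 2 :=
          h2
      _ ≤ N * ∑ v, g v ^ 2 := by
          rw [hTS]
          exact mul_le_mul_of_nonneg_left h3 (hTS ▸ Nat.cast_nonneg _)
      _ = N * ∑ v, g v * g v := by rw [h4]
  -- put everything together
  set β : ℝ := s / n with hβdef
  have hβδ : β ≤ δ := by
    rw [hβdef, div_le_iff₀ hnpos]
    linarith [hS]
  have hβ0 : 0 < β := by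
    rw [hβdef]
    positivity
  have hd2 : (0 : ℝ) < (d : ℝ) ^ 2 := by positivity
  have h5 : s * s ≤ N * (s * β + ε ^ 2 * (s - s * β)) := by
    have hA1 : ((d : ℝ) * s) ^ 2 ≤ N * ((d : ℝ) ^ 2 * (s * β) + (ε * d) ^ 2 * (s - s * β)) :=
      le_trans hCS (by
        rw [← hParse_g]
        exact mul_le_mul_of_nonneg_left hsplit hNS0)
    have hA2 : (d : ℝ) ^ 2 * (s * s) ≤ (d : ℝ) ^ 2 * (N * (s * β + ε ^ 2 * (s - s * β))) := by
      nlinarith [hA1]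
    exact le_of_mul_le_mul_left hA2 hd2
  have hD : 0 < ε ^ 2 * (1 - δ) + δ := by nlinarith [sq_nonneg ε]
  rw [div_le_iff₀ hD]
  have hstep1 : 0 ≤ (δ - β) * (1 - ε ^ 2) := mul_nonneg (by linarith) (by linarith)
  have hstep2 : s * β + ε ^ 2 * (s - s * β) ≤ s * (ε ^ 2 * (1 - δ) + δ) := by
    nlinarith [mul_nonneg (show (0 : ℝ) ≤ s by linarith) hstep1]
  have hstep3 : N * (s * β + ε ^ 2 * (s - s * β)) ≤ N * (s * (ε ^ 2 * (1 - δ) + δ)) :=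
    mul_le_mul_of_nonneg_left hstep2 hNS0
  nlinarith [h5, hstep3, hs1]
end

section
/- For N ≥ 2 and 1 ≤ k ≤ N, let d_N^{(k)} denote the number of vertices y of the hypercube graph H_N such that the (x,y) entry of Σ_{i=1}^{k} A_N^i is nonzero, for a fixed vertex x (this number does not depend on x). Then: d_N^{(1)} = N for all N ≥ 2; d_N^{(2)} = N + d_{N−1}^{(2)} for all N ≥ 3; d_N^{(k)} = d_{N−1}^{(k−1)} + d_{N−1}^{(k)} for all N and k with 3 ≤ k ≤ N−1; and d_N^{(N)} = 2^N for all N ≥ 2. -/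
instance (N : ℕ) : DecidableRel (hypercube N).Adj := fun x y =>
  inferInstanceAs (Decidable (hammingDist x y = 1))

/-- The set of `P^{(k)}`-neighbors of a vertex `x` of `H_N`: those `y` with
`(Σ_{i=1}^k A_N^i) x y ≠ 0`. -/
def pkNbrs (N k : ℕ) (x : Fin N → Bool) : Set (Fin N → Bool) :=
  {y | (∑ i ∈ Finset.Icc 1 k, (SimpleGraph.adjMatrix ℕ (hypercube N)) ^ i) x y ≠ 0}

/-- `d_N^{(k)}`: the number of `P^{(k)}`-neighbors of a fixed vertex of `H_N`. -/
noncomputable def dNk (N k : ℕ) : ℕ :=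
  (pkNbrs N k fun _ => false).ncard

open Finset SimpleGraph

variable {N : ℕ}

lemma hc_adj {x y : Fin N → Bool} : (hypercube N).Adj x y ↔ hammingDist x y = 1 := Iff.rfl

lemma ham_def (x y : Fin N → Bool) :
    hammingDist x y = (Finset.univ.filter fun i => x i ≠ y i).card := rfl

lemma ham_zmod (x y : Fin N → Bool) :
    ((hammingDist x y : ℕ) : ZMod 2) = ∑ i, if x i ≠ y i then (1 : ZMod 2) else 0 := by
  rw [ham_def, Finset.card_filter]
  push_cast
  simp

lemma ham_parity (x y z : Fin N → Bool) :
    ((hammingDist x z : ℕ) : ZMod 2) = (hammingDist x y : ℕ) + (hammingDist y z : ℕ) := by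
  rw [ham_zmod, ham_zmod, ham_zmod, ← Finset.sum_add_distrib]
  apply Finset.sum_congr rfl
  intro i _
  cases hx : x i <;> cases hy : y i <;> cases hz : z i <;> simp [hx, hy, hz] <;> decide

lemma walk_nec {x y : Fin N → Bool} (w : (hypercube N).Walk x y) :
    hammingDist x y ≤ w.length ∧ ((hammingDist x y : ℕ) : ZMod 2) = (w.length : ZMod 2) := by
  induction w with
  | nil => simp [hammingDist_self]
  | @cons a b c h w ih =>
    obtain ⟨h1, h2⟩ := ih
    have hab : hammingDist a b = 1 := h
    constructor
    · calc hammingDist a c ≤ hammingDist a b + hammingDist b c := hammingDist_triangle _ _ _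
        _ ≤ 1 + w.length := by rw [hab]; omega
        _ = (SimpleGraph.Walk.cons h w).length := by simp [SimpleGraph.Walk.length_cons]; omega
    · rw [ham_parity a b c, hab, h2]
      simp [SimpleGraph.Walk.length_cons]
      ring

lemma ham_update {x : Fin N → Bool} {i : Fin N} {b : Bool} (h : x i ≠ b) :
    hammingDist x (Function.update x i b) = 1 := by
  rw [ham_def]
  have : (Finset.univ.filter fun j => x j ≠ Function.update x i b j) = {i} := by
    ext j
    simp only [Finset.mem_filter, Finset.mem_univ, true_and, Finset.mem_singleton,
      Function.update_apply]
    by_cases hj : j = i <;> simp [hj, h]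
  rw [this, Finset.card_singleton]

lemma exists_walk_exact (x y : Fin N → Bool) :
    ∃ w : (hypercube N).Walk x y, w.length = hammingDist x y := by
  have key : ∀ (d : ℕ) (x y : Fin N → Bool), hammingDist x y = d →
      ∃ w : (hypercube N).Walk x y, w.length = d := by
    intro d
    induction d with
    | zero =>
      intro x y h
      rw [hammingDist_eq_zero] at h
      subst h
      exact ⟨SimpleGraph.Walk.nil, rfl⟩
    | succ n ih =>
      intro x y h
      have hne : (Finset.univ.filter fun i => x i ≠ y i).Nonempty := by
        rw [← Finset.card_pos, ← ham_def, h]; omega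
      obtain ⟨i, hi⟩ := hne
      simp only [Finset.mem_filter, Finset.mem_univ, true_and] at hi
      have hadj : (hypercube N).Adj x (Function.update x i (y i)) := ham_update hi
      have hx' : hammingDist (Function.update x i (y i)) y = n := by
        have hset : (Finset.univ.filter fun j => Function.update x i (y i) j ≠ y j) =
            (Finset.univ.filter fun j => x j ≠ y j).erase i := by
          ext j
          simp only [Finset.mem_filter, Finset.mem_univ, true_and, Finset.mem_erase,
            Function.update_apply]
          by_cases hj : j = i <;> simp [hj]
        rw [ham_def, hset, Finset.card_erase_of_mem (by simp [hi]), ← ham_def, h]; omega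
      obtain ⟨w, hw⟩ := ih _ y hx'
      exact ⟨SimpleGraph.Walk.cons hadj w, by simp [hw]⟩
  obtain ⟨w, hw⟩ := key _ x y rfl
  exact ⟨w, hw⟩

lemma exists_walk_suff (hN : 1 ≤ N) (x y : Fin N → Bool) (n : ℕ)
    (h1 : hammingDist x y ≤ n) (h2 : ((hammingDist x y : ℕ) : ZMod 2) = (n : ZMod 2)) :
    ∃ w : (hypercube N).Walk x y, w.length = n := by
  have hdvd : 2 ∣ n - hammingDist x y := by
    have : ((n - hammingDist x y : ℕ) : ZMod 2) = 0 := by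
      push_cast [h1]
      rw [h2]; ring
    exact (ZMod.natCast_eq_zero_iff _ 2).mp this
  obtain ⟨m, hm⟩ := hdvd
  have hn : n = hammingDist x y + 2 * m := by omega
  clear h1 h2 hm
  subst hn
  induction m with
  | zero =>
    obtain ⟨w, hw⟩ := exists_walk_exact x y
    exact ⟨w, by omega⟩
  | succ m ih =>
    obtain ⟨w, hw⟩ := ih
    set i0 : Fin N := ⟨0, hN⟩
    have hne : x i0 ≠ !(x i0) := by cases h : x i0 <;> simp [h]
    have hadj : (hypercube N).Adj x (Function.update x i0 (!(x i0))) := ham_update hne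
    exact ⟨SimpleGraph.Walk.cons hadj (SimpleGraph.Walk.cons hadj.symm w), by
      simp [SimpleGraph.Walk.length_cons, hw]; omega⟩

lemma entry_ne_zero_iff (i : ℕ) (x y : Fin N → Bool) :
    ((SimpleGraph.adjMatrix ℕ (hypercube N)) ^ i) x y ≠ 0 ↔
      ∃ w : (hypercube N).Walk x y, w.length = i := by
  rw [SimpleGraph.adjMatrix_pow_apply_eq_card_walk, Nat.cast_id, ← Nat.pos_iff_ne_zero,
    Fintype.card_pos_iff]
  constructor
  · rintro ⟨⟨w, hw⟩⟩; exact ⟨w, hw⟩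
  · rintro ⟨w, hw⟩; exact ⟨⟨w, hw⟩⟩

lemma mem_pkNbrs_iff {k : ℕ} (hN : 1 ≤ N) (hk : 1 ≤ k) (x y : Fin N → Bool) :
    y ∈ pkNbrs N k x ↔ hammingDist x y ≤ k ∧ (1 ≤ hammingDist x y ∨ 2 ≤ k) := by
  unfold pkNbrs
  simp only [Set.mem_setOf_eq, Matrix.sum_apply]
  constructor
  · intro h
    have hex : ∃ i ∈ Finset.Icc 1 k, ((SimpleGraph.adjMatrix ℕ (hypercube N)) ^ i) x y ≠ 0 := by
      by_contra hc
      push_neg at hc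
      exact h (Finset.sum_eq_zero hc)
    obtain ⟨i, hi, hne⟩ := hex
    rw [entry_ne_zero_iff] at hne
    obtain ⟨w, hw⟩ := hne
    obtain ⟨h1, h2⟩ := walk_nec w
    rw [Finset.mem_Icc] at hi
    refine ⟨by omega, ?_⟩
    by_cases hd : 1 ≤ hammingDist x y
    · exact Or.inl hd
    · right
      have hd0 : hammingDist x y = 0 := by omega
      rw [hw, hd0] at h2
      have : (2:ℕ) ∣ i := by
        rw [← ZMod.natCast_eq_zero_iff]
        exact h2.symm
      omega
  · rintro ⟨h1, h2⟩ hsum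
    rw [Finset.sum_eq_zero_iff] at hsum
    by_cases hd : 1 ≤ hammingDist x y
    · have hz := hsum (hammingDist x y) (Finset.mem_Icc.mpr ⟨hd, h1⟩)
      obtain ⟨w, hw⟩ := exists_walk_exact x y
      exact (entry_ne_zero_iff _ x y).mpr ⟨w, hw⟩ hz
    · have hk2 : 2 ≤ k := by omega
      have hd0 : hammingDist x y = 0 := by omega
      have hz := hsum 2 (Finset.mem_Icc.mpr ⟨by omega, hk2⟩)
      obtain ⟨w, hw⟩ := exists_walk_suff hN x y 2 (by omega) (by rw [hd0]; decide)
      exact (entry_ne_zero_iff _ x y).mpr ⟨w, hw⟩ hz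

lemma count_dist (x : Fin N → Bool) (j : ℕ) :
    (Finset.univ.filter fun y => hammingDist x y = j).card = N.choose j := by
  have h2 : (Finset.powersetCard j (Finset.univ : Finset (Fin N))).card = N.choose j := by
    rw [Finset.card_powersetCard, Finset.card_fin]
  rw [← h2]
  refine Finset.card_nbij' (fun y => Finset.univ.filter fun i => x i ≠ y i)
    (fun s => fun i => xor (x i) (decide (i ∈ s))) ?_ ?_ ?_ ?_
  · intro y hy
    simp only [Finset.mem_coe, Finset.mem_filter, Finset.mem_univ, true_and] at hy
    rw [Finset.mem_coe, Finset.mem_powersetCard]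
    exact ⟨Finset.subset_univ _, by rw [← ham_def, hy]⟩
  · intro s hs
    rw [Finset.mem_coe, Finset.mem_powersetCard] at hs
    simp only [Finset.mem_coe, Finset.mem_filter, Finset.mem_univ, true_and]
    rw [ham_def, ← hs.2]
    congr 1
    ext i
    simp only [Finset.mem_filter, Finset.mem_univ, true_and]
    cases h : x i <;> by_cases hi : i ∈ s <;> simp [h, hi]
  · intro y hy
    funext i
    cases h : x i <;> cases hyi : y i <;> simp [h, hyi]
  · intro s hs
    ext i
    simp only [Finset.mem_filter, Finset.mem_univ, true_and]
    cases h : x i <;> by_cases hi : i ∈ s <;> simp [h, hi]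

lemma pk_card_one (hN : 1 ≤ N) (x : Fin N → Bool) : (pkNbrs N 1 x).ncard = N := by
  have hset : pkNbrs N 1 x = ↑(Finset.univ.filter fun y => hammingDist x y = 1) := by
    ext y
    rw [mem_pkNbrs_iff hN le_rfl]
    simp only [Finset.coe_filter, Finset.mem_univ, true_and, Set.mem_setOf_eq]
    omega
  rw [hset, Set.ncard_coe_finset, count_dist, Nat.choose_one_right]

lemma pk_card {k : ℕ} (hN : 1 ≤ N) (hk : 2 ≤ k) (x : Fin N → Bool) :
    (pkNbrs N k x).ncard = ∑ j ∈ Finset.range (k + 1), N.choose j := by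
  have hset : pkNbrs N k x = ↑(Finset.univ.filter fun y => hammingDist x y ≤ k) := by
    ext y
    rw [mem_pkNbrs_iff hN (by omega)]
    simp only [Finset.coe_filter, Finset.mem_univ, true_and, Set.mem_setOf_eq]
    omega
  rw [hset, Set.ncard_coe_finset]
  rw [Finset.card_eq_sum_card_fiberwise (f := fun y => hammingDist x y)
    (t := Finset.range (k + 1)) (fun y hy => by
      simp only [Finset.mem_coe, Finset.mem_filter] at hy
      simp only [Finset.mem_coe, Finset.mem_range]
      omega)]
  apply Finset.sum_congr rfl
  intro j hj
  simp only [Finset.mem_range] at hj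
  rw [Finset.filter_filter, ← count_dist x j]
  congr 1
  apply Finset.filter_congr
  intro y _
  constructor
  · rintro ⟨_, h⟩; exact h
  · intro h; exact ⟨by omega, h⟩

lemma pascal_sum (M k : ℕ) :
    ∑ j ∈ Finset.range (k + 1), (M + 1).choose j =
      (∑ j ∈ Finset.range k, M.choose j) + ∑ j ∈ Finset.range (k + 1), M.choose j := by
  rw [Finset.sum_range_succ' (fun j => (M + 1).choose j) k]
  simp only [Nat.choose_succ_succ, Nat.choose_zero_right]
  rw [Finset.sum_add_distrib]
  rw [Finset.sum_range_succ' (fun j => M.choose j) k]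
  simp only [Nat.choose_zero_right, Nat.succ_eq_add_one]
  omega


/-- The number of `P^{(k)}`-neighbors of a vertex of `H_N` does not depend on
the vertex, and `d_N^{(k)}` satisfies: `d_N^{(1)} = N`;
`d_N^{(2)} = N + d_{N−1}^{(2)}`; `d_N^{(k)} = d_{N−1}^{(k−1)} + d_{N−1}^{(k)}`
for `3 ≤ k ≤ N−1`; and `d_N^{(N)} = 2^N`. -/
theorem stmt16 :
    (∀ N k : ℕ, 2 ≤ N → 1 ≤ k → k ≤ N → ∀ x : Fin N → Bool,
      (pkNbrs N k x).ncard = dNk N k) ∧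
    (∀ N : ℕ, 2 ≤ N → dNk N 1 = N) ∧
    (∀ N : ℕ, 3 ≤ N → dNk N 2 = N + dNk (N - 1) 2) ∧
    (∀ N k : ℕ, 3 ≤ k → k ≤ N - 1 → dNk N k = dNk (N - 1) (k - 1) + dNk (N - 1) k) ∧
    (∀ N : ℕ, 2 ≤ N → dNk N N = 2 ^ N) := by
  refine ⟨?_, ?_, ?_, ?_, ?_⟩
  · intro N k hN hk1 hkN x
    rcases eq_or_lt_of_le hk1 with h | h
    · subst h
      rw [pk_card_one (by omega) x, dNk, pk_card_one (by omega)]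
    · rw [pk_card (by omega) h x, dNk, pk_card (by omega) h]
  · intro N hN
    rw [dNk, pk_card_one (by omega)]
  · intro N hN
    obtain ⟨M, rfl⟩ : ∃ M, N = M + 1 := ⟨N - 1, by omega⟩
    rw [dNk, dNk, Nat.add_sub_cancel, pk_card (by omega) le_rfl, pk_card (by omega) le_rfl,
      pascal_sum M 2]
    have h2 : ∑ j ∈ Finset.range 2, M.choose j = 1 + M := by
      simp [Finset.sum_range_succ]
    omega
  · intro N k hk3 hkN
    obtain ⟨M, rfl⟩ : ∃ M, N = M + 1 := ⟨N - 1, by omega⟩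
    obtain ⟨l, rfl⟩ : ∃ l, k = l + 1 := ⟨k - 1, by omega⟩
    simp only [Nat.add_sub_cancel] at hkN ⊢
    rw [dNk, dNk, dNk, pk_card (by omega) (by omega), pk_card (by omega) (by omega),
      pk_card (by omega) (by omega)]
    exact pascal_sum M (l + 1)
  · intro N hN
    rw [dNk, pk_card (by omega) hN]
    exact Nat.sum_range_choose N
end
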